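/- A finite group G is the set-theoretic union of three proper cyclic subgroups if and only if G is isomorphic to T × Z_k, where k is odd and T is either the Klein four-group Z₂ × Z₂ or the quaternion group Q₈ of order 8. -/

import Mathlib

namespace Stmt9

open Subgroup Multiplicative QuaternionGroup

lemma pow_mod_eq {G : Type*} [Group G] {g : G} {s : ℕ} (hg : g ^ s = 1) (a : ℕ) :
    g ^ (a % s) = g ^ a := by
  conv_rhs => rw [← Nat.div_add_mod a s]
  rw [pow_add, pow_mul, hg, one_pow, one_mul]

lemma crt_nat {q k : ℕ} (hq : 1 < q) (hk : k * k % q = 1) (ρ c0 : ℕ) :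
    ∃ m : ℕ, m % q = ρ % q ∧ m % k = c0 % k := by
  set d := c0 % k with hd
  refine ⟨d + k * k * ((ρ + q) - d % q), ?_, ?_⟩
  · have h1 : k * k ≡ 1 [MOD q] := by
      unfold Nat.ModEq; rw [hk, Nat.mod_eq_of_lt hq]
    have h2 : d + k * k * ((ρ + q) - d % q) ≡ d + 1 * ((ρ + q) - d % q) [MOD q] :=
      Nat.ModEq.add_left _ (Nat.ModEq.mul_right _ h1)
    rw [h2]
    have h3 := Nat.mod_add_div d q
    have h4 : d % q < q := Nat.mod_lt _ (by omega)
    have h6 : (ρ + q) - d % q + d % q = ρ + q := Nat.sub_add_cancel (by omega)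
    have h7 : q * (d / q + 1) = q * (d / q) + q := by ring
    have h5 : d + 1 * ((ρ + q) - d % q) = ρ + q * (d / q + 1) := by omega
    rw [h5, Nat.add_mul_mod_self_left]
  · rw [mul_assoc, Nat.add_mul_mod_self_left, hd, Nat.mod_mod_of_dvd _ dvd_rfl]

lemma isCyclic_zpowers {G : Type*} [Group G] (g : G) : IsCyclic (zpowers g) := by
  refine ⟨⟨⟨g, mem_zpowers g⟩, ?_⟩⟩
  rintro ⟨x, hx⟩
  obtain ⟨z, hz⟩ := mem_zpowers_iff.mp hx
  exact mem_zpowers_iff.mpr ⟨z, by ext; simp [hz]⟩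

lemma mem_zpowers_symm {G H : Type*} [Group G] [Group H] (e : G ≃* H) (h0 : H) (g : G) :
    g ∈ zpowers (e.symm h0) ↔ e g ∈ zpowers h0 := by
  constructor
  · intro hg
    obtain ⟨z, hz⟩ := mem_zpowers_iff.mp hg
    exact mem_zpowers_iff.mpr ⟨z, by rw [← hz, map_zpow, e.apply_symm_apply]⟩
  · intro hg
    obtain ⟨z, hz⟩ := mem_zpowers_iff.mp hg
    exact mem_zpowers_iff.mpr ⟨z, e.injective (by rw [map_zpow, e.apply_symm_apply, hz])⟩

lemma backward_of_iso {G H : Type*} [Group G] [Group H] (e : G ≃* H)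
    (g1 g2 g3 : H) (h1 : zpowers g1 ≠ ⊤) (h2 : zpowers g2 ≠ ⊤) (h3 : zpowers g3 ≠ ⊤)
    (hcov : ∀ h : H, h ∈ zpowers g1 ∨ h ∈ zpowers g2 ∨ h ∈ zpowers g3) :
    ∃ A B C : Subgroup G, IsCyclic A ∧ IsCyclic B ∧ IsCyclic C ∧
      A ≠ ⊤ ∧ B ≠ ⊤ ∧ C ≠ ⊤ ∧ ∀ g : G, g ∈ A ∨ g ∈ B ∨ g ∈ C := by
  have key : ∀ g0 : H, zpowers g0 ≠ ⊤ → zpowers (e.symm g0) ≠ (⊤ : Subgroup G) := by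
    intro g0 hg0 htop
    apply hg0
    rw [Subgroup.eq_top_iff']
    intro h
    have : e.symm h ∈ zpowers (e.symm g0) := htop ▸ Subgroup.mem_top _
    rw [mem_zpowers_symm] at this
    simpa using this
  refine ⟨zpowers (e.symm g1), zpowers (e.symm g2), zpowers (e.symm g3),
    isCyclic_zpowers _, isCyclic_zpowers _, isCyclic_zpowers _,
    key _ h1, key _ h2, key _ h3, ?_⟩
  intro g
  rcases hcov (e g) with h | h | h
  · exact Or.inl ((mem_zpowers_symm e g1 g).mpr h)
  · exact Or.inr (Or.inl ((mem_zpowers_symm e g2 g).mpr h))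
  · exact Or.inr (Or.inr ((mem_zpowers_symm e g3 g).mpr h))

lemma natCast_eq_of_mod {q : ℕ} [NeZero q] {m : ℕ} {u : ZMod q} (h : m % q = u.val % q) :
    (m : ZMod q) = u := by
  calc (m : ZMod q) = ((m % q : ℕ) : ZMod q) := (ZMod.natCast_mod m q).symm
    _ = ((u.val % q : ℕ) : ZMod q) := by rw [h]
    _ = u := by rw [ZMod.natCast_mod, ZMod.natCast_zmod_val]

lemma ofAdd_one_pow {k : ℕ} [NeZero k] (m : ℕ) (c : Multiplicative (ZMod k))
    (h : m % k = (toAdd c).val % k) : (ofAdd (1 : ZMod k)) ^ m = c := by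
  apply toAdd.injective
  rw [toAdd_pow, toAdd_ofAdd, nsmul_eq_mul, mul_one]
  exact natCast_eq_of_mod h

section V4

variable {k : ℕ} [NeZero k]

lemma V4_mem (hk2 : k * k % 2 = 1) (v : ZMod 2 × ZMod 2) (ρ : ℕ)
    (p : Multiplicative (ZMod 2 × ZMod 2)) (c : Multiplicative (ZMod k))
    (hv : ρ • v = toAdd p) (hper : 2 • v = 0) :
    (p, c) ∈ zpowers ((ofAdd v, ofAdd (1 : ZMod k)) :
      Multiplicative (ZMod 2 × ZMod 2) × Multiplicative (ZMod k)) := by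
  obtain ⟨m, hm2, hmk⟩ := crt_nat (q := 2) one_lt_two hk2 ρ (toAdd c).val
  refine mem_zpowers_iff.mpr ⟨(m : ℤ), ?_⟩
  rw [zpow_natCast]
  refine Prod.ext ?_ ?_
  · show (ofAdd v) ^ m = p
    apply toAdd.injective
    rw [toAdd_pow, toAdd_ofAdd, ← hv]
    have key : ∀ t : ℕ, t • v = (t % 2) • v := by
      intro t
      conv_lhs => rw [← Nat.div_add_mod t 2]
      rw [add_nsmul, mul_nsmul, hper, smul_zero, zero_add]
    rw [key m, key ρ, hm2]
  · exact ofAdd_one_pow m c hmk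

lemma V4_notTop (v : ZMod 2 × ZMod 2) (w : ZMod 2 × ZMod 2)
    (hw : ∀ z : ℤ, z • v ≠ w) :
    zpowers ((ofAdd v, ofAdd (1 : ZMod k)) :
      Multiplicative (ZMod 2 × ZMod 2) × Multiplicative (ZMod k)) ≠ ⊤ := by
  intro htop
  have hmem : ((ofAdd w, ofAdd (0 : ZMod k)) :
      Multiplicative (ZMod 2 × ZMod 2) × Multiplicative (ZMod k)) ∈
      zpowers (ofAdd v, ofAdd (1 : ZMod k)) := htop ▸ Subgroup.mem_top _
  obtain ⟨z, hz⟩ := mem_zpowers_iff.mp hmem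
  apply hw z
  have h1 := congrArg Prod.fst hz
  have h1' : (ofAdd v) ^ z = ofAdd w := h1
  have := congrArg toAdd h1'
  rwa [toAdd_zpow, toAdd_ofAdd, toAdd_ofAdd] at this

lemma V4_facts (hk : Odd k) :
    ∃ g1 g2 g3 : Multiplicative (ZMod 2 × ZMod 2) × Multiplicative (ZMod k),
      zpowers g1 ≠ ⊤ ∧ zpowers g2 ≠ ⊤ ∧ zpowers g3 ≠ ⊤ ∧
      ∀ h, h ∈ zpowers g1 ∨ h ∈ zpowers g2 ∨ h ∈ zpowers g3 := by
  have hk2 : k * k % 2 = 1 := by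
    rcases hk with ⟨j, rfl⟩
    have : (2 * j + 1) * (2 * j + 1) = 2 * (2 * j * j + 2 * j) + 1 := by ring
    omega
  refine ⟨(ofAdd (1, 0), ofAdd 1), (ofAdd (0, 1), ofAdd 1), (ofAdd (1, 1), ofAdd 1),
    ?_, ?_, ?_, ?_⟩
  · refine V4_notTop _ ((0 : ZMod 2), (1 : ZMod 2)) ?_
    intro z h
    have := congrArg Prod.snd h
    simp only [Prod.smul_mk, smul_zero, Prod.snd] at this
    exact zero_ne_one this
  · refine V4_notTop _ ((1 : ZMod 2), (0 : ZMod 2)) ?_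
    intro z h
    have := congrArg Prod.fst h
    simp only [Prod.smul_mk, smul_zero, Prod.fst] at this
    exact zero_ne_one this
  · refine V4_notTop _ ((1 : ZMod 2), (0 : ZMod 2)) ?_
    intro z h
    have h1 := congrArg Prod.fst h
    have h2 := congrArg Prod.snd h
    simp only [Prod.smul_mk, Prod.fst, Prod.snd] at h1 h2
    rw [h1] at h2
    exact one_ne_zero h2
  · rintro ⟨p, c⟩
    have hcases : ∀ w : ZMod 2 × ZMod 2,
        w = (0, 0) ∨ w = (1, 0) ∨ w = (0, 1) ∨ w = (1, 1) := by decide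
    rcases hcases (toAdd p) with h | h | h | h
    · exact Or.inl (V4_mem hk2 (1, 0) 0 p c (by rw [h]; simp; rfl) (by decide))
    · exact Or.inl (V4_mem hk2 (1, 0) 1 p c (by rw [h]; simp) (by decide))
    · exact Or.inr (Or.inl (V4_mem hk2 (0, 1) 1 p c (by rw [h]; simp) (by decide)))
    · exact Or.inr (Or.inr (V4_mem hk2 (1, 1) 1 p c (by rw [h]; simp) (by decide)))

end V4

section Q8side

variable {k : ℕ} [NeZero k]

lemma zpow_eq_pow_toNat {G : Type*} [Group G] (g : G) (s : ℕ) (hs : g ^ s = 1)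
    (hs0 : 0 < s) (z : ℤ) : g ^ z = g ^ (z % (s : ℤ)).toNat := by
  have h0 : g ^ (s : ℤ) = 1 := by rw [zpow_natCast, hs]
  have hnn : 0 ≤ z % (s : ℤ) := Int.emod_nonneg z (by exact_mod_cast hs0.ne')
  calc g ^ z = g ^ (z % (s : ℤ)) := by
        conv_lhs => rw [← Int.emod_add_mul_ediv z (s : ℤ)]
        rw [zpow_add, zpow_mul, h0, one_zpow, mul_one]
    _ = g ^ (((z % (s : ℤ)).toNat : ℤ)) := by rw [Int.toNat_of_nonneg hnn]
    _ = g ^ (z % (s : ℤ)).toNat := zpow_natCast g _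

lemma a_inv (i : ZMod (2 * 2)) : (a i : QuaternionGroup 2)⁻¹ = a (-i) := by
  apply inv_eq_of_mul_eq_one_right
  rw [a_mul_a, add_neg_cancel, one_def]

lemma xa_pow_even (w : ZMod (2 * 2)) (r : ℕ) :
    (xa w : QuaternionGroup 2) ^ (2 * r) = a ((2 * r : ℕ) : ZMod (2 * 2)) := by
  rw [pow_mul, xa_sq, show ((2 : ℕ) : ZMod (2 * 2)) = ((2 : ℕ) : ZMod (2 * 2)) from rfl,
    ← a_one_pow 2, ← pow_mul, a_one_pow]

lemma xa_pow_odd (w : ZMod (2 * 2)) (r : ℕ) :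
    (xa w : QuaternionGroup 2) ^ (2 * r + 1) = xa (w - ((2 * r : ℕ) : ZMod (2 * 2))) := by
  rw [pow_succ, xa_pow_even, a_mul_xa]

lemma cast_four_mul (s : ℕ) : ((4 * s : ℕ) : ZMod (2 * 2)) = 0 := by
  rw [Nat.cast_mul]
  have h4 : ((4 : ℕ) : ZMod (2 * 2)) = 0 := by decide
  rw [h4, zero_mul]

lemma Q8_notTop (v w : QuaternionGroup 2) (hv : v ^ 4 = 1)
    (hw : ∀ t : ℕ, t < 4 → v ^ t ≠ w) :
    zpowers ((v, ofAdd (1 : ZMod k)) : QuaternionGroup 2 × Multiplicative (ZMod k)) ≠ ⊤ := by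
  intro htop
  have hmem : ((w, ofAdd (0 : ZMod k)) : QuaternionGroup 2 × Multiplicative (ZMod k)) ∈
      zpowers (v, ofAdd (1 : ZMod k)) := htop ▸ Subgroup.mem_top _
  obtain ⟨z, hz⟩ := mem_zpowers_iff.mp hmem
  have h1 : v ^ z = w := congrArg Prod.fst hz
  rw [zpow_eq_pow_toNat v 4 hv (by norm_num)] at h1
  refine hw _ ?_ h1
  have : z % (4 : ℤ) < 4 := Int.emod_lt_of_pos z (by norm_num)
  omega

lemma Q8_mem_a (hk4 : k * k % 4 = 1) (u : ZMod (2 * 2)) (c : Multiplicative (ZMod k)) :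
    ((a u, c) : QuaternionGroup 2 × Multiplicative (ZMod k)) ∈
      zpowers (a 1, ofAdd (1 : ZMod k)) := by
  obtain ⟨m, hm4, hmk⟩ := crt_nat (q := 4) (by norm_num) hk4 u.val (toAdd c).val
  refine mem_zpowers_iff.mpr ⟨(m : ℤ), ?_⟩
  rw [zpow_natCast]
  refine Prod.ext ?_ (ofAdd_one_pow m c hmk)
  show (a 1 : QuaternionGroup 2) ^ m = a u
  rw [a_one_pow]
  congr 1
  haveI : NeZero (2 * 2) := ⟨by norm_num⟩
  exact natCast_eq_of_mod hm4

lemma Q8_mem_xa (hk4 : k * k % 4 = 1) (w u : ZMod (2 * 2)) (ρ r0 : ℕ)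
    (hρ : ρ % 4 = 2 * r0 + 1) (hr0 : r0 < 2)
    (hwu : w - ((2 * r0 : ℕ) : ZMod (2 * 2)) = u) (c : Multiplicative (ZMod k)) :
    ((xa u, c) : QuaternionGroup 2 × Multiplicative (ZMod k)) ∈
      zpowers (xa w, ofAdd (1 : ZMod k)) := by
  obtain ⟨m, hm4, hmk⟩ := crt_nat (q := 4) (by norm_num) hk4 ρ (toAdd c).val
  refine mem_zpowers_iff.mpr ⟨(m : ℤ), ?_⟩
  rw [zpow_natCast]
  refine Prod.ext ?_ (ofAdd_one_pow m c hmk)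
  show (xa w : QuaternionGroup 2) ^ m = xa u
  obtain ⟨s, hs⟩ : ∃ s, m = 2 * (2 * s + r0) + 1 := ⟨m / 4, by omega⟩
  rw [hs, xa_pow_odd]
  congr 1
  rw [← hwu]
  congr 1
  rw [show 2 * (2 * s + r0) = 4 * s + 2 * r0 from by ring, Nat.cast_add, cast_four_mul, zero_add]

lemma Q8_facts (hk : Odd k) :
    ∃ g1 g2 g3 : QuaternionGroup 2 × Multiplicative (ZMod k),
      zpowers g1 ≠ ⊤ ∧ zpowers g2 ≠ ⊤ ∧ zpowers g3 ≠ ⊤ ∧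
      ∀ h, h ∈ zpowers g1 ∨ h ∈ zpowers g2 ∨ h ∈ zpowers g3 := by
  have hk4 : k * k % 4 = 1 := by
    rcases hk with ⟨j, rfl⟩
    have : (2 * j + 1) * (2 * j + 1) = 4 * (j * j + j) + 1 := by ring
    omega
  refine ⟨(a 1, ofAdd 1), (xa 0, ofAdd 1), (xa 1, ofAdd 1), ?_, ?_, ?_, ?_⟩
  · exact Q8_notTop _ (xa 0) (by decide) (by decide)
  · exact Q8_notTop _ (a 1) (by decide) (by decide)
  · exact Q8_notTop _ (a 1) (by decide) (by decide)
  · rintro ⟨p, c⟩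
    cases p with
    | a u => exact Or.inl (Q8_mem_a hk4 u c)
    | xa u =>
      have hcases : ∀ w : ZMod (2 * 2), w = 0 ∨ w = 1 ∨ w = 2 ∨ w = 3 := by decide
      rcases hcases u with h | h | h | h <;> subst h
      · exact Or.inr (Or.inl (Q8_mem_xa hk4 0 0 1 0 (by norm_num) (by norm_num) (by decide) c))
      · exact Or.inr (Or.inr (Q8_mem_xa hk4 1 1 1 0 (by norm_num) (by norm_num) (by decide) c))
      · exact Or.inr (Or.inl (Q8_mem_xa hk4 0 2 3 1 (by norm_num) (by norm_num) (by decide) c))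
      · exact Or.inr (Or.inr (Q8_mem_xa hk4 1 3 3 1 (by norm_num) (by norm_num) (by decide) c))

end Q8side

section Infra

variable {G : Type*} [Group G]

lemma mul_self_zpow (w : G) (l : ℤ) : (w * w) ^ l = w ^ (2 * l) := by
  rw [show w * w = w ^ (2 : ℤ) from (zpow_two w).symm, ← zpow_mul]

lemma mul_self_pow (w : G) (l : ℕ) : (w * w) ^ l = w ^ (2 * l) := by
  rw [show w * w = w ^ (2 : ℕ) from (pow_two w).symm, ← pow_mul]

lemma not_union_two (A B : Subgroup G) (h : ∀ g : G, g ∈ A ∨ g ∈ B) : A = ⊤ ∨ B = ⊤ := by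
  by_contra hc
  push_neg at hc
  obtain ⟨hA, hB⟩ := hc
  obtain ⟨u, hu⟩ : ∃ u, u ∉ A := by
    by_contra h'; push_neg at h'; exact hA ((Subgroup.eq_top_iff' _).mpr h')
  obtain ⟨v, hv⟩ : ∃ v, v ∉ B := by
    by_contra h'; push_neg at h'; exact hB ((Subgroup.eq_top_iff' _).mpr h')
  have huB : u ∈ B := (h u).resolve_left hu
  have hvA : v ∈ A := (h v).resolve_right hv
  rcases h (v * u) with hh | hh
  · exact hu (by simpa using mul_mem (inv_mem hvA) hh)
  · exact hv (by simpa using mul_mem hh (inv_mem huB))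

lemma subgroup_cyclic_gen (A : Subgroup G) (hA : IsCyclic A) : ∃ x : G, zpowers x = A := by
  obtain ⟨⟨g, hg⟩, hgen⟩ := hA.exists_generator
  refine ⟨g, le_antisymm (zpowers_le.mpr hg) ?_⟩
  intro a ha
  obtain ⟨z, hz⟩ := mem_zpowers_iff.mp (hgen ⟨a, ha⟩)
  refine mem_zpowers_iff.mpr ⟨z, ?_⟩
  have := congrArg (Subtype.val) hz
  simpa using this

lemma pow_eq_of_mod {g : G} {q : ℕ} (hg : g ^ q = 1) {s t : ℕ} (h : s % q = t % q) :
    g ^ s = g ^ t := by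
  rw [← pow_mod_eq hg s, h, pow_mod_eq hg]

lemma natval_mod_eq {q : ℕ} [NeZero q] (s t : ℕ) (h : (s : ZMod q) = (t : ZMod q)) :
    s % q = t % q := by
  rw [← ZMod.val_natCast (a := s), ← ZMod.val_natCast (a := t), h]

def cycHom (g : G) (k : ℕ) [NeZero k] (hg : g ^ k = 1) :
    Multiplicative (ZMod k) →* G where
  toFun c := g ^ (toAdd c).val
  map_one' := by
    show g ^ (toAdd (1 : Multiplicative (ZMod k))).val = 1
    rw [toAdd_one, ZMod.val_zero, pow_zero]
  map_mul' c d := by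
    show g ^ (toAdd (c * d)).val = g ^ (toAdd c).val * g ^ (toAdd d).val
    rw [toAdd_mul, ZMod.val_add, pow_mod_eq hg, pow_add]

lemma cycHom_apply (g : G) (k : ℕ) [NeZero k] (hg : g ^ k = 1) (c : Multiplicative (ZMod k)) :
    cycHom g k hg c = g ^ (toAdd c).val := rfl

lemma cycHom_one (g : G) (k : ℕ) [NeZero k] (hg : g ^ k = 1) :
    cycHom g k hg (ofAdd 1) = g := by
  rw [cycHom_apply, toAdd_ofAdd]
  have h1 : (1 : ZMod k).val = 1 % k := by
    rw [show (1 : ZMod k) = ((1 : ℕ) : ZMod k) by push_cast; ring, ZMod.val_natCast]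
  rw [h1, pow_mod_eq hg, pow_one]

lemma sq_gen (w r : G) (D : Subgroup G) (hDW : D ≤ zpowers w)
    (hco : ∀ g ∈ zpowers w, g ∉ D → g * r⁻¹ ∈ D) (hwD : w ∉ D) :
    zpowers (w * w) = D := by
  have hw2 : w * w ∈ D := by
    by_contra hcon
    have h2 := hco (w * w) (mul_mem (mem_zpowers w) (mem_zpowers w)) hcon
    have h1 := hco w (mem_zpowers w) hwD
    have h3 := mul_mem h2 (inv_mem h1)
    rw [show w * w * r⁻¹ * (w * r⁻¹)⁻¹ = w from by group] at h3
    exact hwD h3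
  apply le_antisymm
  · rw [zpowers_le]; exact hw2
  · intro d hd
    obtain ⟨kz, hk⟩ := mem_zpowers_iff.mp (hDW hd)
    rcases Int.even_or_odd kz with ⟨l, hl⟩ | ⟨l, hl⟩
    · refine mem_zpowers_iff.mpr ⟨l, ?_⟩
      rw [← hk, hl, mul_self_zpow]; group
    · exfalso
      apply hwD
      have h2 : (w * w) ^ l ∈ D := zpow_mem hw2 l
      have h3 := mul_mem hd (inv_mem h2)
      rw [← hk, hl, show w ^ (2 * l + 1) * ((w * w) ^ l)⁻¹ = w from by
        rw [mul_self_zpow]; group] at h3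
      exact h3

lemma root_ne_one [Finite G] (w : G) (D : Subgroup G)
    (hD : zpowers (w * w) = D) (hwD : w ∉ D) {g : G} (hg : g ∈ zpowers w) (hgD : g ∉ D) :
    g ^ orderOf (w * w) ≠ 1 := by
  set n := orderOf (w * w) with hn
  have hn_pos : 0 < n := orderOf_pos _
  intro hgn
  obtain ⟨kz, hk⟩ := mem_zpowers_iff.mp hg
  rcases Int.even_or_odd kz with ⟨l, hl⟩ | ⟨l, hl⟩
  · apply hgD
    rw [← hk, hl, ← hD]
    exact mem_zpowers_iff.mpr ⟨l, by rw [mul_self_zpow]; group⟩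
  · have hwn : w ^ n = 1 := by
      have h1 : w ^ ((2 * l + 1) * (n : ℤ)) = 1 := by
        calc w ^ ((2 * l + 1) * (n : ℤ)) = (w ^ kz) ^ (n : ℤ) := by rw [← zpow_mul, hl]
          _ = g ^ (n : ℤ) := by rw [hk]
          _ = 1 := by rw [zpow_natCast, hgn]
      have h2 : w ^ ((2 * l + 1) * (n : ℤ)) = ((w * w) ^ (n : ℕ)) ^ l * w ^ (n : ℕ) := by
        rw [mul_self_pow, ← zpow_natCast w (2 * n), ← zpow_mul, ← zpow_natCast w n, ← zpow_add]
        congr 1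
        push_cast
        ring
      rw [h2, pow_orderOf_eq_one, one_zpow, one_mul] at h1
      exact h1
    rcases Nat.even_or_odd n with ⟨e, he⟩ | ⟨e, he⟩
    · have h3 : (w * w) ^ e = 1 := by
        rw [mul_self_pow, show 2 * e = e + e from by ring, ← he, hwn]
      have hdvd : n ∣ e := orderOf_dvd_of_pow_eq_one h3
      rcases Nat.eq_zero_or_pos e with h | h
      · omega
      · have := Nat.le_of_dvd h hdvd
        omega
    · apply hwD
      rw [← hD]
      refine mem_zpowers_iff.mpr ⟨((e + 1 : ℕ) : ℤ), ?_⟩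
      have h5 : (w * w) ^ (e + 1) = w := by
        rw [mul_self_pow, show 2 * (e + 1) = n + 1 from by omega, pow_succ, hwn, one_mul]
      rw [zpow_natCast, h5]

lemma exists_outside (A B C : Subgroup G) (hcov : ∀ g : G, g ∈ A ∨ g ∈ B ∨ g ∈ C)
    (hAt : A ≠ ⊤) (hBt : B ≠ ⊤) : ∃ c0 ∈ C, c0 ∉ A ∧ c0 ∉ B := by
  classical
  by_contra h
  push_neg at h
  refine (not_union_two A B ?_).elim hAt hBt
  intro g
  rcases hcov g with hg | hg | hg
  · exact Or.inl hg
  · exact Or.inr hg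
  · by_cases hA' : g ∈ A
    · exact Or.inl hA'
    · exact Or.inr (h g hg hA')

lemma inf_le_third (A B C : Subgroup G) (hcov : ∀ g : G, g ∈ A ∨ g ∈ B ∨ g ∈ C)
    (hex : ∃ c0 ∈ C, c0 ∉ A ∧ c0 ∉ B) : A ⊓ B ≤ C := by
  obtain ⟨c0, hc0C, hc0A, hc0B⟩ := hex
  intro d hd
  obtain ⟨hdA, hdB⟩ := Subgroup.mem_inf.mp hd
  rcases hcov (d * c0) with h | h | h
  · exact absurd (by simpa using mul_mem (inv_mem hdA) h) hc0A
  · exact absurd (by simpa using mul_mem (inv_mem hdB) h) hc0B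
  · have := mul_mem h (inv_mem hc0C)
    simpa using this

def klein4Hom (u v : G) (hu : u ^ 2 = 1) (hv : v ^ 2 = 1) (huv : u * v = v * u) :
    Multiplicative (ZMod 2 × ZMod 2) →* G where
  toFun p := u ^ (toAdd p).1.val * v ^ (toAdd p).2.val
  map_one' := by
    show u ^ (toAdd (1 : Multiplicative (ZMod 2 × ZMod 2))).1.val *
      v ^ (toAdd (1 : Multiplicative (ZMod 2 × ZMod 2))).2.val = 1
    rw [toAdd_one, Prod.fst_zero, Prod.snd_zero, ZMod.val_zero, pow_zero, pow_zero, one_mul]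
  map_mul' p q := by
    show u ^ (toAdd (p * q)).1.val * v ^ (toAdd (p * q)).2.val =
      u ^ (toAdd p).1.val * v ^ (toAdd p).2.val * (u ^ (toAdd q).1.val * v ^ (toAdd q).2.val)
    have hc : Commute u v := huv
    rw [toAdd_mul, Prod.fst_add, Prod.snd_add, ZMod.val_add, ZMod.val_add,
      pow_mod_eq hu, pow_mod_eq hv, pow_add, pow_add]
    calc u ^ (toAdd p).1.val * u ^ (toAdd q).1.val * (v ^ (toAdd p).2.val * v ^ (toAdd q).2.val)
        = u ^ (toAdd p).1.val * (u ^ (toAdd q).1.val * v ^ (toAdd p).2.val) *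
            v ^ (toAdd q).2.val := by group
      _ = u ^ (toAdd p).1.val * (v ^ (toAdd p).2.val * u ^ (toAdd q).1.val) *
            v ^ (toAdd q).2.val := by
          rw [(hc.pow_pow ((toAdd q).1.val) ((toAdd p).2.val)).eq]
      _ = _ := by group

lemma klein4Hom_apply (u v : G) (hu : u ^ 2 = 1) (hv : v ^ 2 = 1) (huv : u * v = v * u)
    (p : Multiplicative (ZMod 2 × ZMod 2)) :
    klein4Hom u v hu hv huv p = u ^ (toAdd p).1.val * v ^ (toAdd p).2.val := rfl

section Q8Hom

variable {G : Type*} [Group G]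

lemma zmod4_helper1 : ∀ w1 w2 : ZMod (2 * 2), w2 - w1 = 3 * w1 + w2 := by decide

lemma zmod4_helper2 : ∀ w1 w2 : ZMod (2 * 2),
    (2 : ZMod (2 * 2)) + w2 - w1 = 2 + 3 * w1 + w2 := by decide

lemma q8_hvadd (w1 w2 : ZMod (2 * 2)) : (w1 + w2).val % 4 = (w1.val + w2.val) % 4 := by
  haveI : NeZero (2 * 2 : ℕ) := ⟨by norm_num⟩
  have := ZMod.val_add w1 w2
  omega

lemma q8_hc1 (w1 w2 : ZMod (2 * 2)) : (w2 - w1).val % 4 = (3 * w1.val + w2.val) % 4 := by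
  haveI : NeZero (2 * 2 : ℕ) := ⟨by norm_num⟩
  have h1 : (((w2 - w1).val : ℕ) : ZMod (2 * 2)) = ((3 * w1.val + w2.val : ℕ) : ZMod (2 * 2)) := by
    rw [ZMod.natCast_zmod_val, Nat.cast_add, Nat.cast_mul, ZMod.natCast_zmod_val,
      ZMod.natCast_zmod_val, Nat.cast_ofNat, zmod4_helper1 w1 w2]
  exact natval_mod_eq _ _ h1

lemma q8_hc2 (w1 w2 : ZMod (2 * 2)) :
    (((2 : ℕ) : ZMod (2 * 2)) + w2 - w1).val % 4 = (2 + (3 * w1.val + w2.val)) % 4 := by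
  haveI : NeZero (2 * 2 : ℕ) := ⟨by norm_num⟩
  have h1 : ((((2 : ℕ) : ZMod (2 * 2)) + w2 - w1).val : ZMod (2 * 2)) =
      ((2 + (3 * w1.val + w2.val) : ℕ) : ZMod (2 * 2)) := by
    rw [ZMod.natCast_zmod_val, Nat.cast_add, Nat.cast_add, Nat.cast_mul, ZMod.natCast_zmod_val,
      ZMod.natCast_zmod_val, Nat.cast_ofNat, Nat.cast_ofNat, zmod4_helper2 w1 w2, add_assoc]
  exact natval_mod_eq _ _ h1

def q8Hom (i j : G) (hi4 : i ^ 4 = 1) (hjj : j * j = i ^ 2)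
    (hswap : ∀ s : ℕ, i ^ s * j = j * i ^ (3 * s)) : QuaternionGroup 2 →* G where
  toFun q := match q with
    | QuaternionGroup.a w => i ^ w.val
    | QuaternionGroup.xa w => j * i ^ w.val
  map_one' := by
    haveI : NeZero (2 * 2 : ℕ) := ⟨by norm_num⟩
    show i ^ (0 : ZMod (2 * 2)).val = 1
    rw [ZMod.val_zero, pow_zero]
  map_mul' := by
    haveI : NeZero (2 * 2 : ℕ) := ⟨by norm_num⟩
    rintro (w1 | w1) (w2 | w2)
    · show i ^ (w1 + w2).val = i ^ w1.val * i ^ w2.val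
      rw [← pow_add]
      exact pow_eq_of_mod hi4 (q8_hvadd w1 w2)
    · show j * i ^ (w2 - w1).val = i ^ w1.val * (j * i ^ w2.val)
      calc j * i ^ (w2 - w1).val = j * i ^ (3 * w1.val + w2.val) := by
            rw [pow_eq_of_mod hi4 (q8_hc1 w1 w2)]
        _ = (j * i ^ (3 * w1.val)) * i ^ w2.val := by rw [pow_add]; group
        _ = (i ^ w1.val * j) * i ^ w2.val := by rw [← hswap w1.val]
        _ = i ^ w1.val * (j * i ^ w2.val) := by group
    · show j * i ^ (w1 + w2).val = (j * i ^ w1.val) * i ^ w2.val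
      rw [pow_eq_of_mod hi4 (q8_hvadd w1 w2), pow_add]
      group
    · show i ^ (((2 : ℕ) : ZMod (2 * 2)) + w2 - w1).val = (j * i ^ w1.val) * (j * i ^ w2.val)
      calc i ^ (((2 : ℕ) : ZMod (2 * 2)) + w2 - w1).val
          = i ^ (2 + (3 * w1.val + w2.val)) := by rw [pow_eq_of_mod hi4 (q8_hc2 w1 w2)]
        _ = i ^ 2 * (i ^ (3 * w1.val) * i ^ w2.val) := by rw [pow_add, pow_add]
        _ = (j * j) * (i ^ (3 * w1.val) * i ^ w2.val) := by rw [hjj]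
        _ = j * (j * i ^ (3 * w1.val)) * i ^ w2.val := by group
        _ = j * (i ^ w1.val * j) * i ^ w2.val := by rw [← hswap w1.val]
        _ = (j * i ^ w1.val) * (j * i ^ w2.val) := by group

lemma q8Hom_apply_a (i j : G) (hi4 : i ^ 4 = 1) (hjj : j * j = i ^ 2)
    (hswap : ∀ s : ℕ, i ^ s * j = j * i ^ (3 * s)) (w : ZMod (2 * 2)) :
    q8Hom i j hi4 hjj hswap (QuaternionGroup.a w) = i ^ w.val := rfl

lemma q8Hom_apply_xa (i j : G) (hi4 : i ^ 4 = 1) (hjj : j * j = i ^ 2)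
    (hswap : ∀ s : ℕ, i ^ s * j = j * i ^ (3 * s)) (w : ZMod (2 * 2)) :
    q8Hom i j hi4 hjj hswap (QuaternionGroup.xa w) = j * i ^ w.val := rfl

end Q8Hom

end Infra

section Forward

variable {G : Type*} [Group G] [Fintype G]

set_option maxHeartbeats 2000000 in
lemma forward (A B C : Subgroup G) (hA : IsCyclic A) (hB : IsCyclic B) (hC : IsCyclic C)
    (hAt : A ≠ ⊤) (hBt : B ≠ ⊤) (hCt : C ≠ ⊤)
    (hcov : ∀ g : G, g ∈ A ∨ g ∈ B ∨ g ∈ C) :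
    ∃ k : ℕ, Odd k ∧
      (Nonempty (G ≃* Multiplicative (ZMod 2 × ZMod 2) × Multiplicative (ZMod k)) ∨
       Nonempty (G ≃* QuaternionGroup 2 × Multiplicative (ZMod k))) := by
  classical
  -- non-inclusions
  have cover3 : ∀ S T U : Subgroup G, S ≤ T → (∀ g : G, g ∈ S ∨ g ∈ T ∨ g ∈ U) →
      T = ⊤ ∨ U = ⊤ := by
    intro S T U hle hc
    refine not_union_two T U (fun g => ?_)
    rcases hc g with h | h | h
    exacts [Or.inl (hle h), Or.inl h, Or.inr h]
  have covAC : ∀ g : G, g ∈ A ∨ g ∈ C ∨ g ∈ B := by intro g; rcases hcov g with h|h|h <;> tauto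
  have covBA : ∀ g : G, g ∈ B ∨ g ∈ A ∨ g ∈ C := by intro g; rcases hcov g with h|h|h <;> tauto
  have covBC : ∀ g : G, g ∈ B ∨ g ∈ C ∨ g ∈ A := by intro g; rcases hcov g with h|h|h <;> tauto
  have covCA : ∀ g : G, g ∈ C ∨ g ∈ A ∨ g ∈ B := by intro g; rcases hcov g with h|h|h <;> tauto
  have covCB : ∀ g : G, g ∈ C ∨ g ∈ B ∨ g ∈ A := by intro g; rcases hcov g with h|h|h <;> tauto
  have hAB : ¬ A ≤ B := fun hle => (cover3 A B C hle hcov).elim hBt hCt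
  have hAC : ¬ A ≤ C := fun hle => (cover3 A C B hle covAC).elim hCt hBt
  have hBA : ¬ B ≤ A := fun hle => (cover3 B A C hle covBA).elim hAt hCt
  have hBC : ¬ B ≤ C := fun hle => (cover3 B C A hle covBC).elim hCt hAt
  have hCA : ¬ C ≤ A := fun hle => (cover3 C A B hle covCA).elim hAt hBt
  have hCB : ¬ C ≤ B := fun hle => (cover3 C B A hle covCB).elim hBt hAt
  -- generators
  obtain ⟨x, hxA⟩ := subgroup_cyclic_gen A hA
  obtain ⟨y, hyB⟩ := subgroup_cyclic_gen B hB
  obtain ⟨c, hcC⟩ := subgroup_cyclic_gen C hC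
  have hxmem : x ∈ A := by rw [← hxA]; exact mem_zpowers x
  have hymem : y ∈ B := by rw [← hyB]; exact mem_zpowers y
  have hcmem : c ∈ C := by rw [← hcC]; exact mem_zpowers c
  have hxB : x ∉ B := fun h => hAB (by rw [← hxA]; exact zpowers_le.mpr h)
  have hxC : x ∉ C := fun h => hAC (by rw [← hxA]; exact zpowers_le.mpr h)
  have hyA : y ∉ A := fun h => hBA (by rw [← hyB]; exact zpowers_le.mpr h)
  have hyC : y ∉ C := fun h => hBC (by rw [← hyB]; exact zpowers_le.mpr h)
  have hcA : c ∉ A := fun h => hCA (by rw [← hcC]; exact zpowers_le.mpr h)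
  have hcB : c ∉ B := fun h => hCB (by rw [← hcC]; exact zpowers_le.mpr h)
  -- products in C
  have hxyC : x * y ∈ C := by
    rcases hcov (x * y) with h | h | h
    · exact absurd (by simpa using mul_mem (inv_mem hxmem) h) hyA
    · exact absurd (by simpa using mul_mem h (inv_mem hymem)) hxB
    · exact h
  have hyxC : y * x ∈ C := by
    rcases hcov (y * x) with h | h | h
    · exact absurd (by simpa using mul_mem h (inv_mem hxmem)) hyA
    · exact absurd (by simpa using mul_mem (inv_mem hymem) h) hxB
    · exact h
  -- the common intersection D
  set D := A ⊓ B with hDdef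
  have hDA : D ≤ A := inf_le_left
  have hDB : D ≤ B := inf_le_right
  have hDC : D ≤ C := inf_le_third A B C hcov (exists_outside A B C hcov hAt hBt)
  have hACB : A ⊓ C ≤ B := inf_le_third A C B covAC (exists_outside A C B covAC hAt hCt)
  have hBCA : B ⊓ C ≤ A := inf_le_third B C A covBC (exists_outside B C A covBC hBt hCt)
  have hmemD : ∀ g : G, g ∈ A → g ∈ B → g ∈ D := fun g h1 h2 => Subgroup.mem_inf.mpr ⟨h1, h2⟩
  have hnotD_A : ∀ a, a ∈ A → a ∉ D → a ∉ B ∧ a ∉ C := by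
    intro a haA haD
    constructor
    · exact fun hB' => haD (hmemD a haA hB')
    · exact fun hC' => haD (hmemD a haA (hACB (Subgroup.mem_inf.mpr ⟨haA, hC'⟩)))
  have hnotD_B : ∀ b, b ∈ B → b ∉ D → b ∉ A ∧ b ∉ C := by
    intro b hbB hbD
    constructor
    · exact fun hA' => hbD (hmemD b hA' hbB)
    · exact fun hC' => hbD (hmemD b (hBCA (Subgroup.mem_inf.mpr ⟨hbB, hC'⟩)) hbB)
  have hnotD_C : ∀ g, g ∈ C → g ∉ D → g ∉ A ∧ g ∉ B := by
    intro g hgC hgD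
    constructor
    · exact fun hA' => hgD (hmemD g hA' (hACB (Subgroup.mem_inf.mpr ⟨hA', hgC⟩)))
    · exact fun hB' => hgD (hmemD g (hBCA (Subgroup.mem_inf.mpr ⟨hB', hgC⟩)) hB')
  have hxD : x ∉ D := fun h => hxB (hDB h)
  have hyD : y ∉ D := fun h => hyA (hDA h)
  have hcD : c ∉ D := fun h => hcA (hDA h)
  have hxyD : x * y ∉ D := fun h => hxB (by simpa using mul_mem (hDB h) (inv_mem hymem))
  have hyxD : y * x ∉ D := fun h => hyA (by simpa using mul_mem (hDA h) (inv_mem hxmem))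
  -- coset lemmas
  have hAco : ∀ g, g ∈ A → g ∉ D → g * x⁻¹ ∈ D := by
    intro g hgA hgD
    obtain ⟨hgB, hgC⟩ := hnotD_A g hgA hgD
    have h1 : g * y ∈ C := by
      rcases hcov (g * y) with h | h | h
      · exact absurd (by simpa using mul_mem (inv_mem hgA) h) hyA
      · exact absurd (by simpa using mul_mem h (inv_mem hymem)) hgB
      · exact h
    have h2 : (g * y) * (x * y)⁻¹ ∈ C := mul_mem h1 (inv_mem hxyC)
    have h3 : g * x⁻¹ ∈ C := by
      rwa [show (g * y) * (x * y)⁻¹ = g * x⁻¹ from by group] at h2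
    have h4 : g * x⁻¹ ∈ A := mul_mem hgA (inv_mem hxmem)
    exact hmemD _ h4 (hACB (Subgroup.mem_inf.mpr ⟨h4, h3⟩))
  have hBco : ∀ g, g ∈ B → g ∉ D → g * y⁻¹ ∈ D := by
    intro g hgB hgD
    obtain ⟨hgA, hgC⟩ := hnotD_B g hgB hgD
    have h1 : g * x ∈ C := by
      rcases hcov (g * x) with h | h | h
      · exact absurd (by simpa using mul_mem h (inv_mem hxmem)) hgA
      · exact absurd (by simpa using mul_mem (inv_mem hgB) h) hxB
      · exact h
    have h2 : (g * x) * (y * x)⁻¹ ∈ C := mul_mem h1 (inv_mem hyxC)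
    have h3 : g * y⁻¹ ∈ C := by
      rwa [show (g * x) * (y * x)⁻¹ = g * y⁻¹ from by group] at h2
    have h4 : g * y⁻¹ ∈ B := mul_mem hgB (inv_mem hymem)
    exact hmemD _ (hBCA (Subgroup.mem_inf.mpr ⟨h4, h3⟩)) h4
  have hCco : ∀ g, g ∈ C → g ∉ D → g * (x * y)⁻¹ ∈ D := by
    intro g hgC hgD
    obtain ⟨hgA, hgB⟩ := hnotD_C g hgC hgD
    have h1 : g * y⁻¹ ∈ A := by
      rcases hcov (g * y⁻¹) with h | h | h
      · exact h
      · exact absurd (by simpa using mul_mem h hymem) hgB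
      · exact absurd (inv_mem_iff.mp (by simpa using mul_mem (inv_mem hgC) h)) hyC
    have h1D : g * y⁻¹ ∉ D := fun h => hgB (by simpa using mul_mem (hDB h) hymem)
    have h2 := hAco (g * y⁻¹) h1 h1D
    rwa [show g * y⁻¹ * x⁻¹ = g * (x * y)⁻¹ from by group] at h2
  -- D is generated by squares
  have hDx : zpowers (x * x) = D :=
    sq_gen x x D (by rw [hxA]; exact hDA) (fun g hg => hAco g (by rw [← hxA]; exact hg)) hxD
  have hDy : zpowers (y * y) = D :=
    sq_gen y y D (by rw [hyB]; exact hDB) (fun g hg => hBco g (by rw [← hyB]; exact hg)) hyD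
  have hDc2 : zpowers (c * c) = D :=
    sq_gen c (x * y) D (by rw [hcC]; exact hDC) (fun g hg => hCco g (by rw [← hcC]; exact hg)) hcD
  -- orders
  set n := orderOf (x * x) with hn
  have hn_pos : 0 < n := by rw [hn]; exact orderOf_pos _
  have hnD : Nat.card D = n := by rw [← hDx, Nat.card_zpowers]
  have hny : orderOf (y * y) = n := by rw [← Nat.card_zpowers, hDy, hnD]
  have hnc : orderOf (c * c) = n := by rw [← Nat.card_zpowers, hDc2, hnD]
  have hx2D : x * x ∈ D := by rw [← hDx]; exact mem_zpowers _
  have hy2D : y * y ∈ D := by rw [← hDy]; exact mem_zpowers _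
  have hx2n : (x * x) ^ n = 1 := pow_orderOf_eq_one _
  have hy2n : (y * y) ^ n = 1 := by rw [← hny]; exact pow_orderOf_eq_one _
  have hx2n' : x ^ (2 * n) = 1 := by rw [← mul_self_pow, hx2n]
  have hy2n' : y ^ (2 * n) = 1 := by rw [← mul_self_pow, hy2n]
  -- centrality of D
  have comm_zp : ∀ (w u v : G), u ∈ zpowers w → v ∈ zpowers w → u * v = v * u := by
    intro w u v hu hv
    obtain ⟨s, hs⟩ := mem_zpowers_iff.mp hu
    obtain ⟨t, ht⟩ := mem_zpowers_iff.mp hv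
    rw [← hs, ← ht, ← zpow_add, ← zpow_add, add_comm]
  have hDcen : ∀ d ∈ D, ∀ g : G, d * g = g * d := by
    intro d hd g
    rcases hcov g with h | h | h
    · exact comm_zp x d g (by rw [hxA]; exact hDA hd) (by rw [hxA]; exact h)
    · exact comm_zp y d g (by rw [hyB]; exact hDB hd) (by rw [hyB]; exact h)
    · exact comm_zp c d g (by rw [hcC]; exact hDC hd) (by rw [hcC]; exact h)
  have hDcen' : ∀ d ∈ D, ∀ g : G, Commute d g := fun d hd g => hDcen d hd g
  -- the commutator z
  set z := (x * y) * (y * x)⁻¹ with hzdef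
  have hzD : z ∈ D := by
    have h1 := hCco (y * x) hyxC hyxD
    have h2 := inv_mem h1
    rwa [show ((y * x) * (x * y)⁻¹)⁻¹ = z from by rw [hzdef]; group] at h2
  have hxyz : x * y = z * (y * x) := by rw [hzdef]; group
  have hzc : ∀ g : G, z * g = g * z := hDcen z hzD
  have hconj : y⁻¹ * x * y = x * z := by
    calc y⁻¹ * x * y = y⁻¹ * (x * y) := by group
      _ = y⁻¹ * (z * (y * x)) := by rw [← hxyz]
      _ = (y⁻¹ * z) * (y * x) := by group
      _ = (z * y⁻¹) * (y * x) := by rw [hzc y⁻¹]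
      _ = z * x := by group
      _ = x * z := hzc x
  have hzz : z * z = 1 := by
    have e1 : (y⁻¹ * x * y) * (y⁻¹ * x * y) = y⁻¹ * (x * x) * y := by group
    have e2 : (x * z) * (x * z) = (x * x) * (z * z) := by
      calc (x * z) * (x * z) = x * (z * x) * z := by group
        _ = x * (x * z) * z := by rw [hzc x]
        _ = (x * x) * (z * z) := by group
    have e3 : y⁻¹ * (x * x) * y = x * x := by
      rw [← hDcen (x * x) hx2D y⁻¹]
      group
    rw [hconj, e2, e3] at e1
    have e4 : (x * x) * (z * z) = (x * x) * 1 := by rw [mul_one]; exact e1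
    exact mul_left_cancel e4
  -- y^2 as a power of x^2
  obtain ⟨t, ht⟩ : ∃ t : ℤ, (x * x) ^ t = y * y := mem_zpowers_iff.mp (by rw [hDx]; exact hy2D)
  -- roots
  have hxn : x ^ n ≠ 1 := by
    have h0 := root_ne_one x D hDx hxD (mem_zpowers x) hxD
    rwa [← hn] at h0
  have hxyn : (x * y) ^ n ≠ 1 := by
    have h0 := root_ne_one c D hDc2 hcD (g := x * y) (by rw [hcC]; exact hxyC) hxyD
    rwa [hnc] at h0
  rcases Nat.even_or_odd n with hev | hodd
  · -- n even : quaternion case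
    obtain ⟨m, hm⟩ := hev
    have hnm : n = 2 * m := by omega
    have hm_pos : 0 < m := by omega
    -- t is odd
    obtain ⟨s, hts⟩ : ∃ s : ℤ, t = 2 * s + 1 := by
      rcases Int.even_or_odd t with ⟨s, hs⟩ | ⟨s, hs⟩
      · exfalso
        have h1 : (y * y) ^ m = 1 := by
          rw [← ht, ← zpow_natCast ((x * x) ^ t) m, ← zpow_mul]
          have h2 : t * (m : ℤ) = (n : ℤ) * s := by rw [hs]; push_cast [hnm]; ring
          rw [h2, zpow_mul, zpow_natCast, hx2n, one_zpow]
        have h3 : n ∣ m := by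
          have h4 := orderOf_dvd_of_pow_eq_one h1
          rwa [hny] at h4
        have := Nat.le_of_dvd hm_pos h3
        omega
      · exact ⟨s, hs⟩
    have hxxm : (x * x) ^ m = x ^ n := by rw [mul_self_pow, ← hnm]
    have hyn2 : y ^ n = (y * y) ^ m := by rw [mul_self_pow, ← hnm]
    -- z ≠ 1
    have hz_ne : z ≠ 1 := by
      intro hz1
      apply hxyn
      have hcxy : Commute x y := show x * y = y * x by rw [hxyz, hz1, one_mul]
      have h1 : (x * y) ^ n = x ^ n * y ^ n := hcxy.mul_pow n
      have h2 : (x * y) ^ n = ((x * x) : G) ^ ((m : ℤ) + t * m) := by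
        rw [h1, ← hxxm, hyn2, ← ht, ← zpow_natCast (x * x) m, ← zpow_natCast ((x * x) ^ t) m,
          ← zpow_mul, ← zpow_add]
      have h3 : (m : ℤ) + t * m = (n : ℤ) * (s + 1) := by rw [hts]; push_cast [hnm]; ring
      rw [h2, h3, zpow_mul, zpow_natCast, hx2n, one_zpow]
    -- z = x ^ n
    obtain ⟨γ, hγ⟩ := mem_zpowers_iff.mp (show z ∈ zpowers (x * x) from by rw [hDx]; exact hzD)
    have hxn2 : x ^ n * x ^ n = 1 := by rw [← pow_add, show n + n = 2 * n from by ring, hx2n']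
    have hz_xn : z = x ^ n := by
      have h2γ : ((x * x) : G) ^ (2 * γ) = 1 := by rw [two_mul, zpow_add, hγ, hzz]
      have hdvd : ((n : ℕ) : ℤ) ∣ 2 * γ := by
        have := orderOf_dvd_iff_zpow_eq_one.mpr h2γ
        rwa [← hn] at this
      obtain ⟨s', hs'⟩ := hdvd
      have hγm : γ = (m : ℤ) * s' := by
        have h5 : (2 : ℤ) * γ = 2 * ((m : ℤ) * s') := by rw [hs']; push_cast [hnm]; ring
        exact mul_left_cancel₀ two_ne_zero h5
      have hz_pow : z = (x ^ n) ^ s' := by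
        calc z = (x * x) ^ γ := hγ.symm
          _ = ((x * x) ^ ((m : ℕ) : ℤ)) ^ s' := by rw [← zpow_mul, ← hγm]
          _ = (x ^ n) ^ s' := by rw [zpow_natCast, hxxm]
      rcases Int.even_or_odd s' with ⟨s2, hs2⟩ | ⟨s2, hs2⟩
      · exfalso
        apply hz_ne
        rw [hz_pow, hs2, show s2 + s2 = 2 * s2 from by ring, zpow_mul, zpow_two, hxn2, one_zpow]
      · rw [hz_pow, hs2, zpow_add, zpow_mul, zpow_two, hxn2, one_zpow, one_mul, zpow_one]
    -- m is odd
    have hm_odd : Odd m := by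
      by_contra hme
      rw [Nat.not_odd_iff_even] at hme
      obtain ⟨l2, hl2⟩ := hme
      apply hxyn
      have hzinv : z⁻¹ = z := inv_eq_of_mul_eq_one_right hzz
      have hyx' : y * x = z * (x * y) := by
        have h1 : y * x = z⁻¹ * (x * y) := by rw [hxyz]; group
        rw [h1, hzinv]
      have h2xy : (x * y) * (x * y) = z * ((x * x) * (y * y)) := by
        calc (x * y) * (x * y) = x * (y * x) * y := by group
          _ = x * (z * (x * y)) * y := by rw [← hyx']
          _ = (x * z) * ((x * y) * y) := by group
          _ = (z * x) * ((x * y) * y) := by rw [← hzc x]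
          _ = z * ((x * x) * (y * y)) := by group
      have h3 : (x * y) ^ n = ((x * y) * (x * y)) ^ m := by rw [mul_self_pow, ← hnm]
      rw [h3, h2xy]
      have hcom1 : Commute z ((x * x) * (y * y)) := hDcen' z hzD _
      rw [hcom1.mul_pow m]
      have hz_m : z ^ m = 1 := by
        rw [hl2, show l2 + l2 = 2 * l2 from by ring, pow_mul, pow_two, hzz, one_pow]
      have hxyym : ((x * x) * (y * y)) ^ m = 1 := by
        have hcom2 : Commute (x * x) (y * y) := hDcen' _ hx2D _
        rw [hcom2.mul_pow]
        rw [← ht, ← zpow_natCast (x * x) m, ← zpow_natCast ((x * x) ^ t) m, ← zpow_mul, ← zpow_add]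
        have h6 : (m : ℤ) + t * m = (n : ℤ) * (s + 1) := by rw [hts]; push_cast [hnm]; ring
        rw [h6, zpow_mul, zpow_natCast, hx2n, one_zpow]
      rw [hz_m, hxyym, one_mul]
    obtain ⟨lm, hlm⟩ := id hm_odd
    -- order of x
    have hordx : orderOf x = 2 * n := by
      have h1 : orderOf x ∣ 2 * n := orderOf_dvd_of_pow_eq_one hx2n'
      have h2 : n ∣ orderOf x := by
        have h3 : (x * x) ^ (orderOf x) = 1 := by
          rw [mul_self_pow, mul_comm 2 (orderOf x), pow_mul, pow_orderOf_eq_one, one_pow]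
        have h4 := orderOf_dvd_of_pow_eq_one h3
        rwa [← hn] at h4
      obtain ⟨a, ha⟩ := h2
      obtain ⟨b, hb⟩ := h1
      have hop : 0 < orderOf x := orderOf_pos x
      have hab : a * b = 2 := by
        have h5 : n * (a * b) = n * 2 := by
          rw [← mul_assoc, ← ha, ← hb]; ring
        exact Nat.eq_of_mul_eq_mul_left hn_pos h5
      have ha2 : a ∣ 2 := ⟨b, hab.symm⟩
      have hale : a ≤ 2 := Nat.le_of_dvd (by norm_num) ha2
      rcases (by omega : a = 0 ∨ a = 1 ∨ a = 2) with h0 | h1 | h2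
      · rw [h0, Nat.zero_mul] at hab
        exact absurd hab (by norm_num)
      · exfalso
        apply hxn
        have h6 : orderOf x = n := by rw [ha, h1, mul_one]
        rw [← h6]
        exact pow_orderOf_eq_one x
      · rw [ha, h2]
        ring
    -- i and j
    set i := x ^ m with hidef
    set j := y ^ m with hjdef
    have hii : i * i = z := by
      rw [hidef, ← pow_add, show m + m = n from by omega, hz_xn]
    have hi4 : i ^ 4 = 1 := by rw [hidef, ← pow_mul, show m * 4 = 2 * n from by omega, hx2n']
    have hjj : j * j = z := by
      rw [hjdef, ← pow_add, show m + m = n from by omega, hyn2, ← ht]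
      rw [← zpow_natCast ((x * x) ^ t) m, ← zpow_mul]
      have h2 : t * (m : ℤ) = (n : ℤ) * s + m := by rw [hts]; push_cast [hnm]; ring
      rw [h2, zpow_add, zpow_mul, zpow_natCast, hx2n, one_zpow, one_mul, zpow_natCast, hxxm,
        ← hz_xn]
    have hconj_pow : ∀ k : ℕ, (y ^ k)⁻¹ * x * (y ^ k) = x * z ^ k := by
      intro k
      induction k with
      | zero => simp
      | succ k IH =>
        have hzky : z ^ k * y = y * z ^ k := ((hDcen' z hzD y).pow_left k).eq
        calc (y ^ (k + 1))⁻¹ * x * y ^ (k + 1) = y⁻¹ * ((y ^ k)⁻¹ * x * y ^ k) * y := by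
              rw [pow_succ]; group
          _ = y⁻¹ * (x * z ^ k) * y := by rw [IH]
          _ = y⁻¹ * x * (z ^ k * y) := by group
          _ = y⁻¹ * x * (y * z ^ k) := by rw [hzky]
          _ = (y⁻¹ * x * y) * z ^ k := by group
          _ = (x * z) * z ^ k := by rw [hconj]
          _ = x * z ^ (k + 1) := by rw [pow_succ]; group
    have hzm : z ^ m = z := by
      rw [hlm, pow_succ, pow_mul, pow_two, hzz, one_pow, one_mul]
    have hconj_m : (y ^ m)⁻¹ * x * y ^ m = x * z := by rw [hconj_pow m, hzm]
    have conj_pow_id : ∀ (a b : G) (k : ℕ), (b⁻¹ * a * b) ^ k = b⁻¹ * a ^ k * b := by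
      intro a b k
      induction k with
      | zero => simp
      | succ k IH => rw [pow_succ, IH, pow_succ]; group
    have hjij : j⁻¹ * i * j = i * z := by
      rw [hidef, hjdef]
      have h1 : (y ^ m)⁻¹ * x ^ m * y ^ m = ((y ^ m)⁻¹ * x * y ^ m) ^ m :=
        (conj_pow_id x (y ^ m) m).symm
      rw [h1, hconj_m]
      have hcxz : Commute x z := (hzc x).symm
      rw [hcxz.mul_pow m, hzm]
    have hij3 : i * j = j * i ^ 3 := by
      have h1 : i * j = j * (i * z) := by rw [← hjij]; group
      have h3 : i ^ 3 = z * i := by rw [pow_succ, pow_two, hii]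
      have h2 : i * z = i ^ 3 := by
        calc i * z = z * i := (hzc i).symm
          _ = i ^ 3 := h3.symm
      rw [h1, h2]
    have hij3' : ∀ sN : ℕ, i ^ sN * j = j * i ^ (3 * sN) := by
      intro sN
      induction sN with
      | zero => simp
      | succ k IH =>
        calc i ^ (k + 1) * j = i ^ k * (i * j) := by rw [pow_succ]; group
          _ = i ^ k * (j * i ^ 3) := by rw [hij3]
          _ = (i ^ k * j) * i ^ 3 := by group
          _ = (j * i ^ (3 * k)) * i ^ 3 := by rw [IH]
          _ = j * i ^ (3 * (k + 1)) := by rw [show 3 * (k + 1) = 3 * k + 3 from by ring, pow_add]; group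
    have hji2 : j * j = i ^ 2 := by rw [hjj, pow_two, hii]
    -- homs
    haveI : NeZero m := ⟨by omega⟩
    have hx4m : (x ^ 4 : G) ^ m = 1 := by rw [← pow_mul, show 4 * m = 2 * n from by omega, hx2n']
    have hx4D : (x ^ 4 : G) ∈ D := by
      rw [show (x ^ 4 : G) = (x * x) * (x * x) from by
        rw [show (4 : ℕ) = 2 * 2 from rfl, pow_mul, pow_two, pow_two]]
      exact mul_mem hx2D hx2D
    set f := q8Hom i j hi4 hji2 hij3' with hf
    set Ψ := cycHom (x ^ 4) m hx4m with hΨ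
    have hcommf : ∀ q cc, Commute (f q) (Ψ cc) :=
      fun q cc => (hDcen' (Ψ cc) (pow_mem hx4D _) (f q)).symm
    set Φ := f.noncommCoprod Ψ hcommf with hΦ
    have happ : ∀ q cc, Φ (q, cc) = f q * Ψ cc := fun _ _ => rfl
    -- ranges
    have hi_range : i ∈ Φ.range := ⟨(QuaternionGroup.a 1, 1), by
      rw [happ, map_one, mul_one, hf, q8Hom_apply_a]
      rw [show ((1 : ZMod (2 * 2))).val = 1 from by decide, pow_one]⟩
    have hj_range : j ∈ Φ.range := ⟨(QuaternionGroup.xa 0, 1), by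
      haveI : NeZero (2 * 2 : ℕ) := ⟨by norm_num⟩
      rw [happ, map_one, mul_one, hf, q8Hom_apply_xa, ZMod.val_zero, pow_zero, mul_one]⟩
    have hx4_range : (x ^ 4 : G) ∈ Φ.range := ⟨(1, ofAdd 1), by
      rw [happ, map_one, one_mul, hΨ, cycHom_one]⟩
    have hx_range : x ∈ Φ.range := by
      obtain ⟨sm, hsm⟩ : ∃ sm, m * m = 4 * sm + 1 := ⟨lm * lm + lm, by rw [hlm]; ring⟩
      have hxi : (x ^ 4) ^ sm * x = i ^ m := by
        calc (x ^ 4) ^ sm * x = x ^ (4 * sm) * x := by rw [← pow_mul]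
          _ = x ^ (4 * sm + 1) := by rw [pow_succ]
          _ = x ^ (m * m) := by rw [hsm]
          _ = (x ^ m) ^ m := by rw [pow_mul]
          _ = i ^ m := by rw [← hidef]
      have h2 : x = ((x ^ 4) ^ sm)⁻¹ * i ^ m := by rw [← hxi]; group
      rw [h2]
      exact mul_mem (inv_mem (pow_mem hx4_range sm)) (pow_mem hi_range m)
    have hA_range : A ≤ Φ.range := by rw [← hxA]; exact zpowers_le.mpr hx_range
    have hD_range : D ≤ Φ.range := fun d hd => hA_range (hDA hd)
    have hy_eq_j : y = j * ((y * y) ^ lm)⁻¹ := by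
      rw [hjdef, hlm, mul_self_pow]
      group
    have hy_range : y ∈ Φ.range := by
      rw [hy_eq_j]
      exact mul_mem hj_range (inv_mem (hD_range (pow_mem hy2D lm)))
    have hB_range : B ≤ Φ.range := by rw [← hyB]; exact zpowers_le.mpr hy_range
    have hsurj : Function.Surjective Φ := by
      intro g
      have hg : g ∈ Φ.range := by
        rcases hcov g with h | h | h
        · exact hA_range h
        · exact hB_range h
        · by_cases hd : g ∈ D
          · exact hD_range hd
          · have h2 := hCco g h hd
            have h3 : g = (g * (x * y)⁻¹) * (x * y) := by group
            rw [h3]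
            exact mul_mem (hD_range h2) (mul_mem hx_range hy_range)
      exact MonoidHom.mem_range.mp hg
    -- injectivity
    have hjD : j ∉ D := by
      intro h
      apply hyD
      rw [hy_eq_j]
      exact mul_mem h (inv_mem (pow_mem hy2D lm))
    have hinj : Function.Injective Φ := by
      haveI : NeZero (2 * 2 : ℕ) := ⟨by norm_num⟩
      rw [injective_iff_map_eq_one]
      rintro ⟨q, cc⟩ hq
      rw [happ] at hq
      have hcvlt : (toAdd cc).val < m := ZMod.val_lt _
      cases q with
      | a w =>
        rw [hf, q8Hom_apply_a, hΨ, cycHom_apply] at hq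
        have hx0 : x ^ (m * w.val + 4 * (toAdd cc).val) = 1 := by
          rw [pow_add, pow_mul, pow_mul, ← hidef]
          exact hq
        have hdvd : 4 * m ∣ m * w.val + 4 * (toAdd cc).val := by
          have h5 := orderOf_dvd_of_pow_eq_one hx0
          rwa [hordx, show 2 * n = 4 * m from by omega] at h5
        have h4db : (4 : ℕ) ∣ m * w.val := by
          have h41 : (4 : ℕ) ∣ m * w.val + 4 * (toAdd cc).val :=
            dvd_trans ⟨m, by ring⟩ hdvd
          have h42 : (4 : ℕ) ∣ 4 * (toAdd cc).val := ⟨(toAdd cc).val, rfl⟩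
          have h43 := Nat.dvd_sub h41 h42
          rwa [Nat.add_sub_cancel] at h43
        have hcop : Nat.Coprime 4 m := by
          have hco1 : Nat.Coprime 2 m := Nat.coprime_two_left.mpr hm_odd
          have hco2 := hco1.pow_left 2
          rwa [show (2 : ℕ) ^ 2 = 4 from by norm_num] at hco2
        have hw4 : (4 : ℕ) ∣ w.val := hcop.dvd_of_dvd_mul_left h4db
        have hw0 : w.val = 0 := by
          have := ZMod.val_lt w
          omega
        rw [hw0, Nat.mul_zero, Nat.zero_add] at hdvd
        obtain ⟨b, hb⟩ := hdvd
        have hcv0 : (toAdd cc).val = 0 := by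
          have hb' : 4 * (toAdd cc).val = 4 * (m * b) := by rw [hb]; ring
          have hmb : (toAdd cc).val = m * b := by omega
          exact Nat.eq_zero_of_dvd_of_lt ⟨b, hmb⟩ hcvlt
        have hweq : w = 0 := (ZMod.val_eq_zero _).mp hw0
        have hcc1 : cc = 1 := by
          apply toAdd.injective
          rw [toAdd_one]
          exact (ZMod.val_eq_zero _).mp hcv0
        rw [hweq, hcc1]
        rfl
      | xa w =>
        exfalso
        rw [hf, q8Hom_apply_xa, hΨ, cycHom_apply] at hq
        have h1 : j = (i ^ w.val * (x ^ 4) ^ (toAdd cc).val)⁻¹ := by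
          have h2 : j * (i ^ w.val * (x ^ 4) ^ (toAdd cc).val) = 1 := by
            rw [← mul_assoc]; exact hq
          exact eq_inv_of_mul_eq_one_left h2
        have h2 : i ^ w.val * (x ^ 4) ^ (toAdd cc).val ∈ zpowers x := by
          rw [hidef]
          exact mul_mem (pow_mem (pow_mem (mem_zpowers x) m) w.val)
            (pow_mem (pow_mem (mem_zpowers x) 4) (toAdd cc).val)
        have h3 : j ∈ A := by
          rw [← hxA, h1]
          exact inv_mem h2
        have h4 : j ∈ B := by rw [hjdef]; exact pow_mem hymem m
        exact hjD (hmemD j h3 h4)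
    exact ⟨m, hm_odd, Or.inr ⟨(MulEquiv.ofBijective Φ ⟨hinj, hsurj⟩).symm⟩⟩
  · -- n odd : Klein four case
    have hz1 : z = 1 := by
      have h2 : z ^ 2 = 1 := by rw [pow_two]; exact hzz
      have hzn : z ^ n = 1 := by
        obtain ⟨γ, hγ⟩ := mem_zpowers_iff.mp (show z ∈ zpowers (x * x) from by rw [hDx]; exact hzD)
        rw [← hγ, ← zpow_natCast ((x * x) ^ γ) n, ← zpow_mul, mul_comm γ ((n : ℤ)), zpow_mul,
          zpow_natCast, hx2n, one_zpow]
      have hd2 : orderOf z ∣ 2 := orderOf_dvd_of_pow_eq_one h2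
      have hdn : orderOf z ∣ n := orderOf_dvd_of_pow_eq_one hzn
      have hgcd : Nat.gcd 2 n = 1 := Nat.coprime_two_left.mpr hodd
      have h1 : orderOf z ∣ 1 := hgcd ▸ Nat.dvd_gcd hd2 hdn
      exact orderOf_eq_one_iff.mp (Nat.dvd_one.mp h1)
    have hxycomm : x * y = y * x := by rw [hxyz, hz1, one_mul]
    obtain ⟨l, hl⟩ := hodd
    set u := x ^ n with hudef
    set v := y ^ n with hvdef
    have hu2 : u ^ 2 = 1 := by
      rw [hudef, ← pow_mul, show n * 2 = 2 * n from by ring, hx2n']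
    have hv2 : v ^ 2 = 1 := by
      rw [hvdef, ← pow_mul, show n * 2 = 2 * n from by ring, hy2n']
    have hud : u * x⁻¹ ∈ D := by
      have h2 : u * x⁻¹ = (x * x) ^ l := by
        rw [hudef, mul_self_pow, hl]
        group
      rw [h2]; exact pow_mem hx2D l
    have hvd : v * y⁻¹ ∈ D := by
      have h2 : v * y⁻¹ = (y * y) ^ l := by
        rw [hvdef, mul_self_pow, hl]
        group
      rw [h2]; exact pow_mem hy2D l
    have huD : u ∉ D := fun h => hxD (by
      have h2 := mul_mem (inv_mem hud) h
      rwa [show (u * x⁻¹)⁻¹ * u = x from by group] at h2)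
    have hvD : v ∉ D := fun h => hyD (by
      have h2 := mul_mem (inv_mem hvd) h
      rwa [show (v * y⁻¹)⁻¹ * v = y from by group] at h2)
    have hcuv : Commute u v := (show Commute x y from hxycomm).pow_pow n n
    have huv_comm : u * v = v * u := hcuv.eq
    have huvD : u * v ∉ D := by
      intro h
      apply hxyD
      have key : u * v = ((u * x⁻¹) * (v * y⁻¹)) * (x * y) := by
        have hswap : x * (v * y⁻¹) = (v * y⁻¹) * x := (hDcen _ hvd x).symm
        calc u * v = (u * x⁻¹) * (x * (v * y⁻¹)) * y := by group
          _ = (u * x⁻¹) * ((v * y⁻¹) * x) * y := by rw [hswap]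
          _ = ((u * x⁻¹) * (v * y⁻¹)) * (x * y) := by group
      have h2 : x * y = ((u * x⁻¹) * (v * y⁻¹))⁻¹ * (u * v) := by rw [key]; group
      rw [h2]
      exact mul_mem (inv_mem (mul_mem hud hvd)) h
    haveI : NeZero n := ⟨hn_pos.ne'⟩
    set Φ₁ := klein4Hom u v hu2 hv2 huv_comm with hΦ₁
    set Φ₂ := cycHom (x * x) n hx2n with hΦ₂
    have hcommϕ : ∀ p cc, Commute (Φ₁ p) (Φ₂ cc) := by
      intro p cc
      exact (hDcen' (Φ₂ cc) (pow_mem hx2D _) (Φ₁ p)).symm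
    set Φ := Φ₁.noncommCoprod Φ₂ hcommϕ with hΦ
    have happ : ∀ p cc, Φ (p, cc) = Φ₁ p * Φ₂ cc := fun p cc => rfl
    have hx2range : (x * x) ∈ Φ.range := ⟨(1, ofAdd 1), by rw [happ, map_one, one_mul, hΦ₂, cycHom_one]⟩
    have hDrange : D ≤ Φ.range := by rw [← hDx]; exact zpowers_le.mpr hx2range
    have hu_range : u ∈ Φ.range := ⟨(ofAdd (1, 0), 1), by
      rw [happ, map_one, mul_one, hΦ₁, klein4Hom_apply]
      show u ^ ((1 : ZMod 2)).val * v ^ ((0 : ZMod 2)).val = u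
      rw [show ((1 : ZMod 2)).val = 1 from rfl, show ((0 : ZMod 2)).val = 0 from rfl,
        pow_one, pow_zero, mul_one]⟩
    have hv_range : v ∈ Φ.range := ⟨(ofAdd (0, 1), 1), by
      rw [happ, map_one, mul_one, hΦ₁, klein4Hom_apply]
      show u ^ ((0 : ZMod 2)).val * v ^ ((1 : ZMod 2)).val = v
      rw [show ((1 : ZMod 2)).val = 1 from rfl, show ((0 : ZMod 2)).val = 0 from rfl,
        pow_one, pow_zero, one_mul]⟩
    have hx_range : x ∈ Φ.range := by
      have h2 : x = (u * x⁻¹)⁻¹ * u := by group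
      rw [h2]; exact mul_mem (inv_mem (hDrange hud)) hu_range
    have hy_range : y ∈ Φ.range := by
      have h2 : y = (v * y⁻¹)⁻¹ * v := by group
      rw [h2]; exact mul_mem (inv_mem (hDrange hvd)) hv_range
    have hA_range : A ≤ Φ.range := by rw [← hxA]; exact zpowers_le.mpr hx_range
    have hB_range : B ≤ Φ.range := by rw [← hyB]; exact zpowers_le.mpr hy_range
    have hsurj : Function.Surjective Φ := by
      intro g
      have hg : g ∈ Φ.range := by
        rcases hcov g with h | h | h
        · exact hA_range h
        · exact hB_range h
        · by_cases hd : g ∈ D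
          · exact hDrange hd
          · have h2 := hCco g h hd
            have h3 : g = (g * (x * y)⁻¹) * (x * y) := by group
            rw [h3]
            exact mul_mem (hDrange h2) (mul_mem hx_range hy_range)
      exact MonoidHom.mem_range.mp hg
    have hinj : Function.Injective Φ := by
      rw [injective_iff_map_eq_one]
      rintro ⟨p, cc⟩ hpc
      rw [happ, hΦ₁, klein4Hom_apply, hΦ₂, cycHom_apply] at hpc
      have hccD : ((x * x) ^ (toAdd cc).val) ∈ D := pow_mem hx2D _
      have ha : (toAdd p).1.val = 0 ∨ (toAdd p).1.val = 1 := by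
        have := ZMod.val_lt (toAdd p).1; omega
      have hb : (toAdd p).2.val = 0 ∨ (toAdd p).2.val = 1 := by
        have := ZMod.val_lt (toAdd p).2; omega
      rcases ha with ha | ha <;> rcases hb with hb | hb
      · rw [ha, hb, pow_zero, pow_zero, one_mul, one_mul] at hpc
        have h5 : n ∣ (toAdd cc).val := by
          have h6 := orderOf_dvd_of_pow_eq_one hpc
          rwa [← hn] at h6
        have h7 : (toAdd cc).val = 0 := by
          rcases Nat.eq_zero_or_pos (toAdd cc).val with h | h
          · exact h
          · exact absurd (Nat.le_of_dvd h h5) (by have := ZMod.val_lt (toAdd cc); omega)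
        have hp1 : p = 1 := by
          apply toAdd.injective
          rw [toAdd_one]
          exact Prod.ext ((ZMod.val_eq_zero _).mp ha) ((ZMod.val_eq_zero _).mp hb)
        have hc1 : cc = 1 := by
          apply toAdd.injective
          rw [toAdd_one]
          exact (ZMod.val_eq_zero _).mp h7
        rw [hp1, hc1]
        rfl
      · rw [ha, hb, pow_zero, pow_one, one_mul] at hpc
        exact absurd (by rw [eq_inv_of_mul_eq_one_left hpc]; exact inv_mem hccD) hvD
      · rw [ha, hb, pow_one, pow_zero, mul_one] at hpc
        exact absurd (by rw [eq_inv_of_mul_eq_one_left hpc]; exact inv_mem hccD) huD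
      · rw [ha, hb, pow_one, pow_one] at hpc
        exact absurd (by rw [eq_inv_of_mul_eq_one_left hpc]; exact inv_mem hccD) huvD
    exact ⟨n, ⟨l, hl⟩, Or.inl ⟨(MulEquiv.ofBijective Φ ⟨hinj, hsurj⟩).symm⟩⟩

end Forward

end Stmt9


/-- A finite group `G` is the set-theoretic union of three proper cyclic
subgroups if and only if `G ≅ T × Z_k` with `k` odd and `T` the Klein four-group or the
quaternion group `Q₈` (realized as `QuaternionGroup 2`). -/
theorem stmt_9 {G : Type*} [Group G] [Fintype G] :
    (∃ A B C : Subgroup G, IsCyclic A ∧ IsCyclic B ∧ IsCyclic C ∧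
      A ≠ ⊤ ∧ B ≠ ⊤ ∧ C ≠ ⊤ ∧ ∀ g : G, g ∈ A ∨ g ∈ B ∨ g ∈ C) ↔
    (∃ k : ℕ, Odd k ∧
      (Nonempty (G ≃* Multiplicative (ZMod 2 × ZMod 2) × Multiplicative (ZMod k)) ∨
       Nonempty (G ≃* QuaternionGroup 2 × Multiplicative (ZMod k)))) := by
  constructor
  · rintro ⟨A, B, C, hA, hB, hC, hAt, hBt, hCt, hcov⟩
    exact Stmt9.forward A B C hA hB hC hAt hBt hCt hcov
  · rintro ⟨k, hk, he | he⟩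
    · obtain ⟨e⟩ := he
      haveI : NeZero k := ⟨by rcases hk with ⟨j, rfl⟩; omega⟩
      obtain ⟨g1, g2, g3, h1, h2, h3, hcv⟩ := Stmt9.V4_facts hk
      exact Stmt9.backward_of_iso e g1 g2 g3 h1 h2 h3 hcv
    · obtain ⟨e⟩ := he
      haveI : NeZero k := ⟨by rcases hk with ⟨j, rfl⟩; omega⟩
      obtain ⟨g1, g2, g3, h1, h2, h3, hcv⟩ := Stmt9.Q8_facts hk
      exact Stmt9.backward_of_iso e g1 g2 g3 h1 h2 h3 hcv
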